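/- Let k be a field of characteristic 0, V a finite-dimensional k-vector space, E = Λ(V) the exterior algebra, and F : E → k a nonzero linear functional vanishing on every graded component of degree ≠ 3, with annihilator ideal I_F = {h ∈ E : F(g·h) = 0 for all g ∈ E}. Then the space of linear functionals K on Λ³V that vanish on the degree-3 component I_F ∩ Λ³V is exactly the one-dimensional span of the restriction of F to Λ³V. In particular, F can be recovered from the ideal I_F up to a nonzero scalar. -/

import Mathlib

set_option maxHeartbeats 1000000

noncomputable section

open ExteriorAlgebra

variable {k : Type} [Field k] [CharZero k]
variable {V : Type} [AddCommGroup V] [Module k V] [FiniteDimensional k V]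

/-- The annihilator ideal `I_F = {h ∈ E : F(g·h) = 0 for all g ∈ E}` of a linear
functional `F` on the exterior algebra `E = Λ(V)`, as a set. -/
def annSet (F : ExteriorAlgebra k V →ₗ[k] k) : Set (ExteriorAlgebra k V) :=
  {h : ExteriorAlgebra k V | ∀ g : ExteriorAlgebra k V, F (g * h) = 0}

/-- Skew-commutative Macaulay correspondence (converse direction): for a nonzero linear
functional `F` on `E = Λ(V)` vanishing in all degrees `≠ 3`, the space of linear functionals
on `Λ³V` vanishing on `I_F ∩ Λ³V` is exactly the one-dimensional span of the restriction of
`F` to `Λ³V`; in particular `F` is recovered from `I_F` up to a nonzero scalar. -/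
theorem skew_macaulay_converse
    (F : ExteriorAlgebra k V →ₗ[k] k) (hF : F ≠ 0)
    (hdeg : ∀ n : ℕ, n ≠ 3 → ∀ x ∈ ⋀[k]^n V, F x = 0) :
    F ∘ₗ (⋀[k]^3 V).subtype ≠ 0 ∧
    {K : (⋀[k]^3 V) →ₗ[k] k | ∀ x : ⋀[k]^3 V, (x : ExteriorAlgebra k V) ∈ annSet F → K x = 0}
      = Set.range (fun c : k => c • (F ∘ₗ (⋀[k]^3 V).subtype)) := by
  classical
  set F₃ := F ∘ₗ (⋀[k]^3 V).subtype with hF₃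
  -- F₃ ≠ 0
  have hF3ne : F₃ ≠ 0 := by
    intro h0
    apply hF
    apply LinearMap.ext
    intro x
    refine DirectSum.Decomposition.inductionOn (fun n : ℕ => ⋀[k]^n V)
      (motive := fun m => F m = 0) (by simp) ?_ ?_ x
    · intro i m
      by_cases hi : i = 3
      · subst hi
        have := LinearMap.congr_fun h0 m
        simpa [F₃] using this
      · exact hdeg i hi m m.2
    · intro a b ha hb; simp [ha, hb]
  refine ⟨hF3ne, ?_⟩
  -- key: for x ∈ Λ³, F x = 0 → x ∈ annSet F
  have key : ∀ x : ⋀[k]^3 V, F (x : ExteriorAlgebra k V) = 0 →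
      (x : ExteriorAlgebra k V) ∈ annSet F := by
    intro x hx g
    refine DirectSum.Decomposition.inductionOn (fun n : ℕ => ⋀[k]^n V)
      (motive := fun g => F (g * (x : ExteriorAlgebra k V)) = 0) (by simp) ?_ ?_ g
    · intro i m
      by_cases hi : i = 0
      · subst hi
        have hm : (m : ExteriorAlgebra k V) ∈ (1 : Submodule k (ExteriorAlgebra k V)) := by
          have h2 : (m : ExteriorAlgebra k V) ∈
              (LinearMap.range (ι k : V →ₗ[k] ExteriorAlgebra k V)) ^ 0 := m.2
          rwa [pow_zero] at h2
        obtain ⟨c, hc⟩ := Submodule.mem_one.mp hm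
        rw [← hc, ← Algebra.smul_def]
        simp [hx]
      · have hmem : (m : ExteriorAlgebra k V) * (x : ExteriorAlgebra k V) ∈ ⋀[k]^(i + 3) V :=
          SetLike.mul_mem_graded m.2 x.2
        exact hdeg (i + 3) (by omega) _ hmem
    · intro a b ha hb
      rw [add_mul]; simp [ha, hb]
  ext K
  simp only [Set.mem_setOf_eq, Set.mem_range]
  constructor
  · intro hK
    -- K vanishes on ker F₃, so K = c • F₃
    obtain ⟨y, hy⟩ : ∃ y : ⋀[k]^3 V, F₃ y ≠ 0 := by
      by_contra h
      push_neg at h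
      exact hF3ne (LinearMap.ext fun z => by simpa using h z)
    refine ⟨K y / F₃ y, ?_⟩
    refine LinearMap.ext fun z => ?_
    have hz : F₃ (z - (F₃ z / F₃ y) • y) = 0 := by
      rw [map_sub, map_smul, smul_eq_mul, div_mul_cancel₀ _ hy, sub_self]
    have hKz : K (z - (F₃ z / F₃ y) • y) = 0 := by
      apply hK
      apply key
      simpa [F₃] using hz
    rw [map_sub, map_smul, smul_eq_mul, sub_eq_zero] at hKz
    rw [LinearMap.smul_apply, smul_eq_mul, hKz, div_mul_eq_mul_div, div_mul_eq_mul_div,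
      mul_comm]
  · rintro ⟨c, rfl⟩ x hx
    have h1 : F ((1 : ExteriorAlgebra k V) * (x : ExteriorAlgebra k V)) = 0 := hx 1
    rw [one_mul] at h1
    rw [LinearMap.smul_apply]
    have : F₃ x = 0 := h1
    rw [this, smul_zero]
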